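/- For i.i.d. uniform points on (0,1) with parameters r = 2, c = 1/2, the domination number of the PICD minus 1 converges in distribution to a Bernoulli random variable with success probability 4/9 as n → ∞. -/

import Mathlib

open Set MeasureTheory Filter Topology

/-- The parameterized proximity region on `(0,1)`. -/
noncomputable def N01 (r c x : ℝ) : Set ℝ :=
  if x < c then Set.Ioo 0 (min 1 (r * x)) else Set.Ioo (max 0 (1 - r * (1 - x))) 1

/-- The domination number of the digraph on vertices `X 0, …, X (n-1)` where `u` dominates
itself and every vertex lying in `N u`. -/
noncomputable def domNum (n : ℕ) (X : Fin n → ℝ) (N : ℝ → Set ℝ) : ℕ :=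
  sInf {k | ∃ S : Finset (Fin n), S.card = k ∧
    ∀ j, ∃ i ∈ S, X j = X i ∨ X j ∈ N (X i)}

/-- The joint law of `n` i.i.d. uniform random variables on `(0,1)`. -/
noncomputable def unifPi (n : ℕ) : Measure (Fin n → ℝ) :=
  Measure.pi fun _ => volume.restrict (Set.Ioo (0:ℝ) 1)

def Dom (n : ℕ) (x : Fin n → ℝ) : Prop :=
  ∃ i, ∀ j, x j = x i ∨ x j ∈ N01 2 (1/2) (x i)

lemma dom_iff {n : ℕ} {x : Fin n → ℝ} (hx : ∀ i, x i ∈ Set.Ioo (0:ℝ) 1) :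
    Dom n x ↔ ∃ i, (x i < 1/2 ∧ ∀ j, x j < 2 * x i) ∨
      (1/2 ≤ x i ∧ ∀ j, 2 * x i - 1 < x j) := by
  constructor
  · rintro ⟨i, hi⟩
    refine ⟨i, ?_⟩
    by_cases h : x i < 1/2
    · refine Or.inl ⟨h, fun j => ?_⟩
      rcases hi j with h' | h'
      · have := (hx i).1; linarith [h'.ge, h'.le]
      · simp only [N01, if_pos (by linarith : x i < (1/2:ℝ))] at h'
        have : x j < min 1 (2 * x i) := h'.2
        exact lt_of_lt_of_le this (min_le_right _ _)
    · refine Or.inr ⟨not_lt.1 h, fun j => ?_⟩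
      rcases hi j with h' | h'
      · have := (hx i).2; rw [h']; linarith
      · simp only [N01, if_neg (by linarith : ¬ x i < (1/2:ℝ))] at h'
        have : max 0 (1 - 2 * (1 - x i)) < x j := h'.1
        have h2 : (1 - 2 * (1 - x i)) ≤ max 0 (1 - 2 * (1 - x i)) := le_max_right _ _
        linarith
  · rintro ⟨i, hi | hi⟩
    · refine ⟨i, fun j => Or.inr ?_⟩
      simp only [N01, if_pos (by linarith [hi.1] : x i < (1/2:ℝ))]
      constructor
      · exact (hx j).1
      · exact lt_min (hx j).2 (hi.2 j)
    · refine ⟨i, fun j => Or.inr ?_⟩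
      simp only [N01, if_neg (by linarith [hi.1] : ¬ x i < (1/2:ℝ))]
      constructor
      · exact max_lt (hx j).1 (by linarith [hi.2 j])
      · exact (hx j).2

lemma mem_N01_left {xi xk : ℝ} (hxi : xi ∈ Set.Ioo (0:ℝ) 1) (hxk : xk ∈ Set.Ioo (0:ℝ) 1)
    (h : xi < 1/2) (hle : xk < 2 * xi) : xk ∈ N01 2 (1/2) xi := by
  simp only [N01, if_pos (by linarith : xi < (1/2:ℝ))]
  exact ⟨hxk.1, lt_min hxk.2 hle⟩

lemma mem_N01_right {xi xk : ℝ} (hxi : xi ∈ Set.Ioo (0:ℝ) 1) (hxk : xk ∈ Set.Ioo (0:ℝ) 1)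
    (h : ¬ xi < 1/2) (hle : 2 * xi - 1 < xk) : xk ∈ N01 2 (1/2) xi := by
  simp only [N01, if_neg h]
  exact ⟨max_lt hxk.1 (by linarith), hxk.2⟩

lemma two_mem_domSet {n : ℕ} {x : Fin n → ℝ} (hx : ∀ i, x i ∈ Set.Ioo (0:ℝ) 1)
    (hD : ¬ Dom n x) (hn : 0 < n) :
    ∃ S : Finset (Fin n), S.card = 2 ∧ ∀ j, ∃ i ∈ S, x j = x i ∨ x j ∈ N01 2 (1/2) (x i) := by
  haveI : NeZero n := ⟨hn.ne'⟩
  set L : Finset (Fin n) := Finset.univ.filter (fun k => x k < 1/2) with hL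
  set R : Finset (Fin n) := Finset.univ.filter (fun k => ¬ x k < 1/2) with hR
  have hLne : L.Nonempty := by
    by_contra h
    -- all points are ≥ 1/2 : the min dominates
    obtain ⟨j₀, -, hj₀⟩ := Finset.exists_min_image Finset.univ x Finset.univ_nonempty
    refine hD ((dom_iff hx).2 ⟨j₀, Or.inr ⟨?_, fun j => ?_⟩⟩)
    · by_contra hj
      exact h ⟨j₀, Finset.mem_filter.2 ⟨Finset.mem_univ _, by linarith⟩⟩
    · have h1 := hj₀ j (Finset.mem_univ j)
      have := (hx j₀).2
      linarith
  have hRne : R.Nonempty := by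
    by_contra h
    obtain ⟨i₀, -, hi₀⟩ := Finset.exists_max_image Finset.univ x Finset.univ_nonempty
    refine hD ((dom_iff hx).2 ⟨i₀, Or.inl ⟨?_, fun j => ?_⟩⟩)
    · by_contra hj
      exact h ⟨i₀, Finset.mem_filter.2 ⟨Finset.mem_univ _, hj⟩⟩
    · have h1 := hi₀ j (Finset.mem_univ j)
      have := (hx i₀).1
      linarith
  obtain ⟨i, hiL, hi⟩ := Finset.exists_max_image L x hLne
  obtain ⟨j, hjR, hj⟩ := Finset.exists_min_image R x hRne
  have hxi : x i < 1/2 := (Finset.mem_filter.1 hiL).2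
  have hxj : ¬ x j < 1/2 := (Finset.mem_filter.1 hjR).2
  have hij : i ≠ j := fun h => hxj (h ▸ hxi)
  refine ⟨{i, j}, Finset.card_pair hij, fun k => ?_⟩
  by_cases hk : x k < 1/2
  · refine ⟨i, by simp, Or.inr (mem_N01_left (hx i) (hx k) hxi ?_)⟩
    have := hi k (Finset.mem_filter.2 ⟨Finset.mem_univ _, hk⟩)
    have := (hx i).1
    linarith
  · refine ⟨j, by simp, Or.inr (mem_N01_right (hx j) (hx k) hxj ?_)⟩
    have := hj k (Finset.mem_filter.2 ⟨Finset.mem_univ _, hk⟩)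
    have := (hx j).2
    linarith

lemma zero_not_mem_domSet {n : ℕ} {x : Fin n → ℝ} (hn : 0 < n) :
    ¬ ∃ S : Finset (Fin n), S.card = 0 ∧
      ∀ j, ∃ i ∈ S, x j = x i ∨ x j ∈ N01 2 (1/2) (x i) := by
  rintro ⟨S, hS0, hS⟩
  obtain ⟨i, hi, -⟩ := hS ⟨0, hn⟩
  simp [Finset.card_eq_zero.1 hS0] at hi

lemma one_mem_domSet_iff {n : ℕ} {x : Fin n → ℝ} :
    (∃ S : Finset (Fin n), S.card = 1 ∧
      ∀ j, ∃ i ∈ S, x j = x i ∨ x j ∈ N01 2 (1/2) (x i)) ↔ Dom n x := by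
  constructor
  · rintro ⟨S, hS1, hS⟩
    obtain ⟨i, rfl⟩ := Finset.card_eq_one.1 hS1
    refine ⟨i, fun j => ?_⟩
    obtain ⟨i', hi', h⟩ := hS j
    simpa [Finset.mem_singleton.1 hi'] using h
  · rintro ⟨i, hi⟩
    exact ⟨{i}, Finset.card_singleton i, fun j => ⟨i, Finset.mem_singleton_self i, hi j⟩⟩

lemma domNum_of_dom {n : ℕ} {x : Fin n → ℝ} (hn : 0 < n) (hD : Dom n x) :
    domNum n x (N01 2 (1/2)) = 1 := by
  have h1 : 1 ∈ {k | ∃ S : Finset (Fin n), S.card = k ∧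
      ∀ j, ∃ i ∈ S, x j = x i ∨ x j ∈ N01 2 (1/2) (x i)} := one_mem_domSet_iff.2 hD
  refine le_antisymm (Nat.sInf_le h1) ?_
  rw [Nat.one_le_iff_ne_zero]
  intro h0
  unfold domNum at h0
  rw [Nat.sInf_eq_zero] at h0
  rcases h0 with h0 | h0
  · exact zero_not_mem_domSet hn h0
  · exact absurd h1 (h0 ▸ Set.notMem_empty _)

lemma domNum_of_not_dom {n : ℕ} {x : Fin n → ℝ} (hx : ∀ i, x i ∈ Set.Ioo (0:ℝ) 1)
    (hn : 0 < n) (hD : ¬ Dom n x) :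
    domNum n x (N01 2 (1/2)) = 2 := by
  have h2 := two_mem_domSet hx hD hn
  refine le_antisymm (Nat.sInf_le h2) (le_csInf ⟨2, h2⟩ ?_)
  rintro k hk
  rcases Nat.lt_or_ge k 2 with h | h
  · interval_cases k
    · exact absurd hk (zero_not_mem_domSet hn)
    · exact absurd (one_mem_domSet_iff.1 hk) hD
  · exact h

noncomputable abbrev nu : Measure ℝ := volume.restrict (Set.Ioo (0:ℝ) 1)

instance : IsProbabilityMeasure nu := ⟨by simp⟩

instance (n : ℕ) : IsProbabilityMeasure (unifPi n) := by
  unfold unifPi; infer_instance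

lemma ae_cube (n : ℕ) : ∀ᵐ x ∂(unifPi n), ∀ i, x i ∈ Set.Ioo (0:ℝ) 1 := by
  rw [ae_all_iff]
  intro i
  have : unifPi n (Function.eval i ⁻¹' (Set.Ioo (0:ℝ) 1)ᶜ) = 0 := by
    rw [show unifPi n = Measure.pi fun _ => nu from rfl]
    apply Measure.pi_eval_preimage_null
    rw [Measure.restrict_apply' measurableSet_Ioo]
    simp
  exact this

lemma ae_ne (n : ℕ) (i j : Fin n) (hij : i ≠ j) :
    unifPi n {x | x i = x j} = 0 := by
  rcases n with - | m
  · exact absurd i.2 (by omega)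
  · obtain ⟨k₀, hk₀⟩ := Fin.exists_succAbove_eq hij
    have e := MeasureTheory.measurePreserving_piFinSuccAbove (fun _ : Fin (m+1) => nu) j
    have hset : {x : Fin (m+1) → ℝ | x i = x j} =
        (MeasurableEquiv.piFinSuccAbove (fun _ => ℝ) j) ⁻¹' {p : ℝ × (Fin m → ℝ) | p.2 k₀ = p.1} := by
      ext x
      simp only [Set.mem_setOf_eq, Set.mem_preimage]
      have : (MeasurableEquiv.piFinSuccAbove (fun _ => ℝ) j) x =
          (x j, fun k => x (j.succAbove k)) := rfl
      rw [this, ← hk₀]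
    rw [show unifPi (m+1) = Measure.pi fun _ => nu from rfl, hset,
      e.measure_preimage]
    · have hm : MeasurableSet {p : ℝ × (Fin m → ℝ) | p.2 k₀ = p.1} :=
        measurableSet_eq_fun (by fun_prop) measurable_fst
      rw [Measure.prod_apply hm]
      have h0 : ∀ a : ℝ, (Measure.pi fun _ : Fin m => nu) {y : Fin m → ℝ | y k₀ = a} = 0 :=
        fun a => Measure.pi_hyperplane (fun _ : Fin m => nu) k₀ a
      simp only [show ∀ x : ℝ, (Prod.mk x ⁻¹' {p : ℝ × (Fin m → ℝ) | p.2 k₀ = p.1})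
          = {a : Fin m → ℝ | a k₀ = x} from fun _ => rfl, h0, lintegral_zero]
    · exact (measurableSet_eq_fun (by fun_prop : Measurable fun p : ℝ × (Fin m → ℝ) => p.2 k₀)
        measurable_fst).nullMeasurableSet

lemma ae_distinct (n : ℕ) : ∀ᵐ x ∂(unifPi n), ∀ i j, i ≠ j → x i ≠ x j := by
  have : ∀ i j : Fin n, i ≠ j → ∀ᵐ x ∂(unifPi n), x i ≠ x j := by
    intro i j hij
    exact compl_mem_ae_iff.2 (ae_ne n i j hij)
  rw [ae_all_iff]
  intro i
  rw [ae_all_iff]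
  intro j
  by_cases hij : i = j
  · exact ae_of_all _ (fun x h => absurd hij h)
  · filter_upwards [this i j hij] with x hx _
    exact hx

def Tset (n : ℕ) : Set (Fin n → ℝ) :=
  {x | ∀ i, (∃ j, 2 * x i ≤ x j) ∨ (∃ j, x j ≤ 2 * x i - 1)}

def Uset (n : ℕ) (i j : Fin n) : Set (Fin n → ℝ) :=
  {x | (∀ k, k ≠ i → x i < x k) ∧ (∀ k, k ≠ j → x k < x j)}

lemma measurableSet_Tset (n : ℕ) : MeasurableSet (Tset n) := by
  have : Tset n = ⋂ i, ((⋃ j, {x : Fin n → ℝ | 2 * x i ≤ x j}) ∪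
      (⋃ j, {x : Fin n → ℝ | x j ≤ 2 * x i - 1})) := by
    ext x; simp [Tset]
  rw [this]
  refine MeasurableSet.iInter fun i => MeasurableSet.union ?_ ?_ <;>
    refine MeasurableSet.iUnion fun j => ?_
  · exact measurableSet_le (by fun_prop) (by fun_prop)
  · exact measurableSet_le (by fun_prop) (by fun_prop)

lemma measurableSet_Uset (n : ℕ) (i j : Fin n) : MeasurableSet (Uset n i j) := by
  have : Uset n i j = (⋂ k, ⋂ (_ : k ≠ i), {x : Fin n → ℝ | x i < x k}) ∩
      (⋂ k, ⋂ (_ : k ≠ j), {x : Fin n → ℝ | x k < x j}) := by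
    ext x; simp [Uset]
  rw [this]
  refine MeasurableSet.inter ?_ ?_ <;>
    refine MeasurableSet.iInter fun k => MeasurableSet.iInter fun _ => ?_
  · exact measurableSet_lt (by fun_prop) (by fun_prop)
  · exact measurableSet_lt (by fun_prop) (by fun_prop)

lemma Uset_disjoint {n : ℕ} {i j i' j' : Fin n} (h : (i, j) ≠ (i', j')) :
    Disjoint (Uset n i j) (Uset n i' j') := by
  rw [Set.disjoint_left]
  rintro x ⟨h1, h2⟩ ⟨h1', h2'⟩
  by_cases hii : i = i'
  · subst hii
    have hjj : j ≠ j' := fun hjj => h (by rw [hjj])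
    exact lt_irrefl _ (lt_trans (h2 j' (Ne.symm hjj)) (h2' j hjj))
  · exact lt_irrefl _ (lt_trans (h1 i' (Ne.symm hii)) (h1' i hii))

lemma comp_measurePreserving (n : ℕ) (σ : Equiv.Perm (Fin n)) :
    MeasurePreserving (fun x : Fin n → ℝ => x ∘ σ) (unifPi n) (unifPi n) := by
  have h := MeasureTheory.measurePreserving_piCongrLeft (fun _ : Fin n => nu) σ.symm
  have hco : ⇑(MeasurableEquiv.piCongrLeft (fun _ : Fin n => ℝ) σ.symm) =
      fun x : Fin n → ℝ => x ∘ σ := by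
    funext x
    funext i
    show (Equiv.piCongrLeft (fun _ : Fin n => ℝ) σ.symm) x i = x (σ i)
    have := Equiv.piCongrLeft_apply_apply (fun _ : Fin n => ℝ) σ.symm x (σ i)
    simpa using this
  rw [hco] at h
  exact h

lemma Tset_comp_mem {n : ℕ} (σ : Equiv.Perm (Fin n)) {x : Fin n → ℝ} :
    x ∘ σ ∈ Tset n ↔ x ∈ Tset n := by
  constructor
  · intro h i
    rcases h (σ.symm i) with ⟨j, hj⟩ | ⟨j, hj⟩
    · exact Or.inl ⟨σ j, by simpa using hj⟩
    · exact Or.inr ⟨σ j, by simpa using hj⟩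
  · intro h i
    rcases h (σ i) with ⟨j, hj⟩ | ⟨j, hj⟩
    · exact Or.inl ⟨σ.symm j, by simpa using hj⟩
    · exact Or.inr ⟨σ.symm j, by simpa using hj⟩

lemma Uset_comp_mem {n : ℕ} (σ : Equiv.Perm (Fin n)) {x : Fin n → ℝ} (i j : Fin n) :
    x ∘ σ ∈ Uset n i j ↔ x ∈ Uset n (σ i) (σ j) := by
  constructor
  · rintro ⟨h1, h2⟩
    constructor
    · intro k hk
      have := h1 (σ.symm k) (fun hc => hk (by rw [← hc]; simp))
      simpa using this
    · intro k hk
      have := h2 (σ.symm k) (fun hc => hk (by rw [← hc]; simp))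
      simpa using this
  · rintro ⟨h1, h2⟩
    constructor
    · intro k hk
      exact h1 (σ k) (fun hc => hk (σ.injective hc))
    · intro k hk
      exact h2 (σ k) (fun hc => hk (σ.injective hc))

lemma exists_perm_zero_one {n : ℕ} (i j : Fin (n+2)) (hij : i ≠ j) :
    ∃ τ : Equiv.Perm (Fin (n+2)), τ 0 = i ∧ τ 1 = j := by
  refine ⟨(Equiv.swap 1 ((Equiv.swap 0 i) j)).trans (Equiv.swap 0 i), ?_, ?_⟩
  · have h1 : (Equiv.swap 1 ((Equiv.swap 0 i) j)) 0 = 0 := by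
      apply Equiv.swap_apply_of_ne_of_ne
      · simp [Fin.ext_iff]
      · intro hc
        have : j = (Equiv.swap 0 i) 0 := by
          apply (Equiv.swap 0 i).injective
          rw [Equiv.swap_apply_self]
          exact hc.symm
        rw [Equiv.swap_apply_left] at this
        exact hij this.symm
    rw [Equiv.trans_apply, h1, Equiv.swap_apply_left]
  · have h1 : (Equiv.swap 1 ((Equiv.swap 0 i) j)) 1 = (Equiv.swap 0 i) j :=
      Equiv.swap_apply_left _ _
    rw [Equiv.trans_apply, h1, Equiv.swap_apply_self]

lemma symmetry_measure {n : ℕ} (i j : Fin (n+2)) (hij : i ≠ j) :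
    unifPi (n+2) (Tset (n+2) ∩ Uset (n+2) i j) =
    unifPi (n+2) (Tset (n+2) ∩ Uset (n+2) 0 1) := by
  obtain ⟨τ, hτ0, hτ1⟩ := exists_perm_zero_one i j hij
  set σ := τ.symm with hσ
  have hpre : (fun x : Fin (n+2) → ℝ => x ∘ σ) ⁻¹' (Tset (n+2) ∩ Uset (n+2) i j) =
      Tset (n+2) ∩ Uset (n+2) (σ i) (σ j) := by
    ext x
    simp only [Set.mem_preimage, Set.mem_inter_iff]
    rw [Tset_comp_mem σ, Uset_comp_mem σ i j]
  have hm := (comp_measurePreserving (n+2) σ).measure_preimage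
    ((measurableSet_Tset (n+2)).inter (measurableSet_Uset (n+2) i j)).nullMeasurableSet
  rw [hpre] at hm
  have hσi : σ i = 0 := by rw [hσ, ← hτ0, Equiv.symm_apply_apply]
  have hσj : σ j = 1 := by rw [hσ, ← hτ1, Equiv.symm_apply_apply]
  rw [hσi, hσj] at hm
  exact hm.symm

lemma decomposition (n : ℕ) :
    unifPi (n+2) (Tset (n+2)) =
      ((n+2) * (n+1) : ℕ) • unifPi (n+2) (Tset (n+2) ∩ Uset (n+2) 0 1) := by
  classical
  set μ := unifPi (n+2)
  set bigU := ⋃ p ∈ (Finset.univ : Finset (Fin (n+2))).offDiag, Uset (n+2) p.1 p.2 with hbigU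
  have hcov : μ bigUᶜ = 0 := by
    have : bigU ∈ ae μ := by
      filter_upwards [ae_distinct (n+2)] with x hx
      obtain ⟨i, -, hi⟩ := Finset.exists_min_image Finset.univ x ⟨0, Finset.mem_univ 0⟩
      obtain ⟨j, -, hj⟩ := Finset.exists_max_image Finset.univ x ⟨0, Finset.mem_univ 0⟩
      have hij : i ≠ j := by
        intro hc
        subst hc
        set k : Fin (n+2) := if i = 0 then 1 else 0 with hk
        have hki : k ≠ i := by
          rw [hk]
          split
          · rename_i h; rw [h]; simp [Fin.ext_iff]
          · rename_i h; exact fun hc' => h hc'.symm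
        have h1 := hi k (Finset.mem_univ k)
        have h2 := hj k (Finset.mem_univ k)
        exact hx i k (Ne.symm hki) (le_antisymm h1 h2)
      rw [hbigU, Set.mem_iUnion₂]
      refine ⟨(i, j), Finset.mem_offDiag.2 ⟨Finset.mem_univ _, Finset.mem_univ _, hij⟩, ?_, ?_⟩
      · intro k hk
        exact lt_of_le_of_ne (hi k (Finset.mem_univ k)) (fun hc => (hx i k (Ne.symm hk) hc).elim)
      · intro k hk
        exact lt_of_le_of_ne (hj k (Finset.mem_univ k)) (fun hc => (hx k j hk hc).elim)
    exact (mem_ae_iff.1 this)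
  have h1 : μ (Tset (n+2)) = μ (Tset (n+2) ∩ bigU) := (measure_inter_conull hcov).symm
  rw [h1, Set.inter_iUnion₂]
  rw [measure_biUnion_finset ?hd ?hm]
  case hd =>
    rintro ⟨i, j⟩ hij ⟨i', j'⟩ hij' hne
    exact (Uset_disjoint hne).mono inter_subset_right inter_subset_right
  case hm =>
    rintro ⟨i, j⟩ -
    exact (measurableSet_Tset _).inter (measurableSet_Uset _ i j)
  have : ∀ p ∈ (Finset.univ : Finset (Fin (n+2))).offDiag,
      μ (Tset (n+2) ∩ Uset (n+2) p.1 p.2) = μ (Tset (n+2) ∩ Uset (n+2) 0 1) := by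
    rintro ⟨i, j⟩ hp
    have hij : i ≠ j := by
      simpa using (Finset.mem_offDiag.1 hp).2.2
    exact symmetry_measure i j hij
  rw [Finset.sum_congr rfl this, Finset.sum_const, Finset.offDiag_card]
  congr 1
  rw [Finset.card_univ, Fintype.card_fin]
  exact Nat.sub_eq_of_eq_add (by ring)

def W2 (m : ℕ) : Set (ℝ × ℝ × (Fin m → ℝ)) :=
  {p | (p.1 < p.2.1 ∧ ∀ k, (p.1 < p.2.2 k ∧ p.2.2 k < p.2.1)) ∧
       (2 * p.1 ≤ p.2.1 ∨ p.1 ≤ 2 * p.1 - 1) ∧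
       (2 * p.2.1 ≤ p.2.1 ∨ p.1 ≤ 2 * p.2.1 - 1) ∧
       (∀ k, 2 * p.2.2 k ≤ p.2.1 ∨ p.1 ≤ 2 * p.2.2 k - 1)}

lemma measurableSet_W2 (m : ℕ) : MeasurableSet (W2 m) := by
  have mfst : Measurable fun p : ℝ × ℝ × (Fin m → ℝ) => p.1 := measurable_fst
  have msnd1 : Measurable fun p : ℝ × ℝ × (Fin m → ℝ) => p.2.1 :=
    measurable_fst.comp measurable_snd
  have meval : ∀ k, Measurable fun p : ℝ × ℝ × (Fin m → ℝ) => p.2.2 k := fun k =>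
    (measurable_pi_apply k).comp (measurable_snd.comp measurable_snd)
  have hW : W2 m = ({p : ℝ × ℝ × (Fin m → ℝ) | p.1 < p.2.1} ∩
      ⋂ k, ({p : ℝ × ℝ × (Fin m → ℝ) | p.1 < p.2.2 k} ∩ {p | p.2.2 k < p.2.1})) ∩
      (({p : ℝ × ℝ × (Fin m → ℝ) | 2*p.1 ≤ p.2.1} ∪ {p | p.1 ≤ 2*p.1-1}) ∩
      (({p : ℝ × ℝ × (Fin m → ℝ) | 2*p.2.1 ≤ p.2.1} ∪ {p | p.1 ≤ 2*p.2.1-1}) ∩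
      ⋂ k, ({p : ℝ × ℝ × (Fin m → ℝ) | 2*p.2.2 k ≤ p.2.1} ∪ {p | p.1 ≤ 2*p.2.2 k-1}))) := by
    ext p
    simp only [W2, Set.mem_setOf_eq, Set.mem_inter_iff, Set.mem_iInter, Set.mem_union,
      Set.mem_setOf_eq, forall_and]
    try tauto
  rw [hW]
  refine MeasurableSet.inter (MeasurableSet.inter ?_ ?_)
    (MeasurableSet.inter ?_ (MeasurableSet.inter ?_ ?_))
  · exact measurableSet_lt mfst msnd1
  · exact MeasurableSet.iInter fun k =>
      (measurableSet_lt mfst (meval k)).inter (measurableSet_lt (meval k) msnd1)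
  · exact (measurableSet_le (mfst.const_mul 2) msnd1).union
      (measurableSet_le mfst ((mfst.const_mul 2).sub measurable_const))
  · exact (measurableSet_le (msnd1.const_mul 2) msnd1).union
      (measurableSet_le mfst ((msnd1.const_mul 2).sub measurable_const))
  · exact MeasurableSet.iInter fun k =>
      (measurableSet_le ((meval k).const_mul 2) msnd1).union
        (measurableSet_le mfst (((meval k).const_mul 2).sub measurable_const))

lemma fin2cases {m : ℕ} (P : Fin (m+2) → Prop) (h0 : P 0) (h1 : P 1)
    (hs : ∀ k : Fin m, P k.succ.succ) : ∀ i, P i := by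
  intro i
  induction i using Fin.cases with
  | zero => exact h0
  | succ j =>
    induction j using Fin.cases with
    | zero => rw [Fin.succ_zero_eq_one]; exact h1
    | succ k => exact hs k

lemma one_ne_zero_fin (m : ℕ) : (1 : Fin (m+2)) ≠ 0 := by
  simp [Fin.ext_iff]

lemma succsucc_ne_zero {m : ℕ} (k : Fin m) : (k.succ.succ : Fin (m+2)) ≠ 0 :=
  Fin.succ_ne_zero _

lemma succsucc_ne_one {m : ℕ} (k : Fin m) : (k.succ.succ : Fin (m+2)) ≠ 1 := by
  intro h
  rw [← Fin.succ_zero_eq_one] at h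
  exact Fin.succ_ne_zero k (Fin.succ_injective _ h)

lemma mem_TU_iff_W2 {m : ℕ} (x : Fin (m+2) → ℝ) :
    x ∈ Tset (m+2) ∩ Uset (m+2) 0 1 ↔
      ((x 0, x 1, fun k : Fin m => x k.succ.succ) : ℝ × ℝ × (Fin m → ℝ)) ∈ W2 m := by
  constructor
  · rintro ⟨hT, hU1, hU2⟩
    have hC : ∀ i, 2 * x i ≤ x 1 ∨ x 0 ≤ 2 * x i - 1 := by
      intro i
      rcases hT i with ⟨j, hj⟩ | ⟨j, hj⟩
      · left
        rcases eq_or_ne j 1 with rfl | hj1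
        · exact hj
        · exact le_of_lt (lt_of_le_of_lt hj (hU2 j hj1))
      · right
        rcases eq_or_ne j 0 with rfl | hj0
        · exact hj
        · exact le_of_lt (lt_of_lt_of_le (hU1 j hj0) hj)
    refine ⟨⟨hU1 1 (one_ne_zero_fin m), fun k =>
        ⟨hU1 _ (succsucc_ne_zero k), hU2 _ (succsucc_ne_one k)⟩⟩,
      hC 0, hC 1, fun k => hC _⟩
  · rintro ⟨⟨hab, hy⟩, hCa, hCb, hCy⟩
    have hU1 : ∀ k, k ≠ (0 : Fin (m+2)) → x 0 < x k := by
      refine fin2cases _ (fun h => absurd rfl h) (fun _ => hab) (fun k _ => (hy k).1)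
    have hU2 : ∀ k, k ≠ (1 : Fin (m+2)) → x k < x 1 := by
      refine fin2cases _ (fun _ => hab) (fun h => absurd rfl h) (fun k _ => (hy k).2)
    refine ⟨?_, hU1, hU2⟩
    have hC : ∀ i, 2 * x i ≤ x 1 ∨ x 0 ≤ 2 * x i - 1 :=
      fin2cases _ hCa hCb hCy
    intro i
    rcases hC i with h | h
    · exact Or.inl ⟨1, h⟩
    · exact Or.inr ⟨0, h⟩

/-- the inner 2-variable integrand -/
noncomputable def Kern (m : ℕ) (a b : ℝ) : ENNReal :=
  if a < b ∧ (2*a ≤ b ∨ a ≤ 2*a-1) ∧ (2*b ≤ b ∨ a ≤ 2*b-1)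
    then (nu {t : ℝ | (a < t ∧ t < b) ∧ (2*t ≤ b ∨ a ≤ 2*t-1)})^m else 0

lemma core_measure (m : ℕ) :
    unifPi (m+2) (Tset (m+2) ∩ Uset (m+2) 0 1) = ∫⁻ a, ∫⁻ b, Kern m a b ∂nu ∂nu := by
  classical
  have mp₁ := MeasureTheory.measurePreserving_piFinSuccAbove (fun _ : Fin (m+2) => nu) 0
  have mp₂ := MeasureTheory.measurePreserving_piFinSuccAbove (fun _ : Fin (m+1) => nu) 0
  have mp₃ := (MeasurePreserving.id nu).prod mp₂
  have mp := mp₃.comp mp₁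
  set G : (Fin (m+2) → ℝ) → ℝ × ℝ × (Fin m → ℝ) :=
    (Prod.map id ⇑(MeasurableEquiv.piFinSuccAbove (fun _ : Fin (m+1) => ℝ) 0)) ∘
      ⇑(MeasurableEquiv.piFinSuccAbove (fun _ : Fin (m+2) => ℝ) 0) with hG
  have hGx : ∀ x : Fin (m+2) → ℝ,
      G x = (x 0, x 1, fun k : Fin m => x k.succ.succ) := by
    intro x
    rw [hG]
    show (Prod.map id _) ((MeasurableEquiv.piFinSuccAbove (fun _ : Fin (m+2) => ℝ) 0) x) = _
    have h1 : (MeasurableEquiv.piFinSuccAbove (fun _ : Fin (m+2) => ℝ) 0) x =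
        (x 0, fun j : Fin (m+1) => x j.succ) := rfl
    rw [h1]
    have h2 : (MeasurableEquiv.piFinSuccAbove (fun _ : Fin (m+1) => ℝ) 0)
        (fun j : Fin (m+1) => x j.succ) = (x (Fin.succ 0), fun k : Fin m => x k.succ.succ) := rfl
    show (x 0, (MeasurableEquiv.piFinSuccAbove (fun _ : Fin (m+1) => ℝ) 0)
        (fun j : Fin (m+1) => x j.succ)) = _
    rw [h2, Fin.succ_zero_eq_one]
  have hpre : G ⁻¹' (W2 m) = Tset (m+2) ∩ Uset (m+2) 0 1 := by
    ext x
    rw [Set.mem_preimage, hGx x]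
    exact (mem_TU_iff_W2 x).symm
  rw [← hpre]
  have hmeq : unifPi (m+2) (G ⁻¹' (W2 m)) =
      (nu.prod (nu.prod (Measure.pi fun _ : Fin m => nu))) (W2 m) :=
    mp.measure_preimage (measurableSet_W2 m).nullMeasurableSet
  rw [hmeq, Measure.prod_apply (measurableSet_W2 m)]
  refine lintegral_congr fun a => ?_
  rw [Measure.prod_apply (measurable_prodMk_left (measurableSet_W2 m))]
  refine lintegral_congr fun b => ?_
  have hslice : (Prod.mk b ⁻¹' (Prod.mk a ⁻¹' W2 m)) =
      if a < b ∧ (2*a ≤ b ∨ a ≤ 2*a-1) ∧ (2*b ≤ b ∨ a ≤ 2*b-1)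
        then Set.pi Set.univ (fun _ : Fin m => {t : ℝ | (a < t ∧ t < b) ∧ (2*t ≤ b ∨ a ≤ 2*t-1)})
        else (∅ : Set (Fin m → ℝ)) := by
    split
    · rename_i hc
      ext y
      simp only [Set.mem_preimage, Set.mem_pi, Set.mem_univ, forall_true_left]
      constructor
      · rintro ⟨⟨-, hy⟩, -, -, hCy⟩
        exact fun k => ⟨⟨(hy k).1, (hy k).2⟩, hCy k⟩
      · intro h
        exact ⟨⟨hc.1, fun k => (h k).1⟩, hc.2.1, hc.2.2, fun k => (h k).2⟩
    · rename_i hc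
      ext y
      simp only [Set.mem_preimage, Set.mem_empty_iff_false, iff_false]
      rintro ⟨⟨hab, hy⟩, hCa, hCb, -⟩
      exact hc ⟨hab, hCa, hCb⟩
  rw [hslice]
  unfold Kern
  split
  · rw [Measure.pi_pi]
    simp [Finset.prod_const]
  · simp

/-- the inner real integrand -/
noncomputable def fb (m : ℕ) (a : ℝ) : ℝ → ℝ :=
  Set.indicator {b' : ℝ | 2*a ≤ b' ∧ a+1 ≤ 2*b'} (fun b' => ((3*(b'-a)-1)/2)^m)

/-- closed form of the inner integral -/
noncomputable def gInner (m : ℕ) (a : ℝ) : ℝ :=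
  if a < 1/2 then (2/(3*(m+1))) *
    (((2-3*a)/2)^(m+1) - (max ((3*a-1)/2) ((1-3*a)/4))^(m+1)) else 0

lemma measurableSet_region (m : ℕ) (a : ℝ) :
    MeasurableSet {b' : ℝ | 2*a ≤ b' ∧ a+1 ≤ 2*b'} :=
  (measurableSet_le measurable_const measurable_id).inter
    (measurableSet_le measurable_const (measurable_id.const_mul 2))

lemma kern_eq_ofReal_fb {m : ℕ} {a b : ℝ} (ha : a ∈ Set.Ioo (0:ℝ) 1)
    (hb : b ∈ Set.Ioo (0:ℝ) 1) : Kern m a b = ENNReal.ofReal (fb m a b) := by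
  obtain ⟨ha0, ha1⟩ := ha
  obtain ⟨hb0, hb1⟩ := hb
  by_cases hR : 2*a ≤ b ∧ a+1 ≤ 2*b
  · obtain ⟨hR1, hR2⟩ := hR
    have hcond : a < b ∧ (2*a ≤ b ∨ a ≤ 2*a-1) ∧ (2*b ≤ b ∨ a ≤ 2*b-1) :=
      ⟨by linarith, Or.inl hR1, Or.inr (by linarith)⟩
    rw [Kern, if_pos hcond]
    have hJ : {t : ℝ | (a < t ∧ t < b) ∧ (2*t ≤ b ∨ a ≤ 2*t-1)} ∩ Set.Ioo 0 1 =
        Set.Ioc a (b/2) ∪ Set.Ico ((a+1)/2) b := by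
      ext t
      simp only [Set.mem_inter_iff, Set.mem_setOf_eq, Set.mem_Ioo, Set.mem_union,
        Set.mem_Ioc, Set.mem_Ico]
      constructor
      · rintro ⟨⟨⟨hat, htb⟩, h | h⟩, ht0, ht1⟩
        · exact Or.inl ⟨hat, by linarith⟩
        · exact Or.inr ⟨by linarith, htb⟩
      · rintro (⟨hat, ht⟩ | ⟨ht, htb⟩)
        · exact ⟨⟨⟨hat, by linarith⟩, Or.inl (by linarith)⟩, by linarith, by linarith⟩
        · exact ⟨⟨⟨by linarith, htb⟩, Or.inr (by linarith)⟩, by linarith, by linarith⟩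
    have hdisj : Disjoint (Set.Ioc a (b/2)) (Set.Ico ((a+1)/2) b) := by
      rw [Set.disjoint_left]
      rintro t ⟨-, ht1⟩ ⟨ht2, -⟩
      linarith
    have hnu : nu {t : ℝ | (a < t ∧ t < b) ∧ (2*t ≤ b ∨ a ≤ 2*t-1)} =
        ENNReal.ofReal ((3*(b-a)-1)/2) := by
      rw [Measure.restrict_apply' measurableSet_Ioo, hJ, measure_union hdisj measurableSet_Ico,
        Real.volume_Ioc, Real.volume_Ico, ← ENNReal.ofReal_add (by linarith) (by linarith)]
      congr 1
      ring
    rw [hnu, ← ENNReal.ofReal_pow (by linarith)]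
    congr 1
    rw [fb, Set.indicator_of_mem]
    exact ⟨hR1, hR2⟩
  · have hcond : ¬ (a < b ∧ (2*a ≤ b ∨ a ≤ 2*a-1) ∧ (2*b ≤ b ∨ a ≤ 2*b-1)) := by
      rintro ⟨hab, h1 | h1, h2 | h2⟩
      · linarith
      · exact hR ⟨h1, by linarith⟩
      · linarith
      · linarith
    rw [Kern, if_neg hcond, fb, Set.indicator_of_notMem]
    · simp
    · intro hmem
      exact hR ⟨hmem.1, hmem.2⟩

lemma integrableOn_pow_fn (m : ℕ) (a c d : ℝ) (u v : ℝ) :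
    IntegrableOn (fun b' : ℝ => ((3*(b'-a)-1)/2)^m) (Set.Ioo u v) volume := by
  apply IntegrableOn.mono_set (t := Set.Icc u v) _ Set.Ioo_subset_Icc_self
  exact (Continuous.integrableOn_Icc (by continuity))

lemma fb_integrableOn (m : ℕ) (a : ℝ) : IntegrableOn (fb m a) (Set.Ioo 0 1) volume :=
  (integrableOn_pow_fn m a 0 0 0 1).indicator (measurableSet_region m a)

lemma fb_nonneg {m : ℕ} {a : ℝ} (b : ℝ) : 0 ≤ fb m a b := by
  apply Set.indicator_nonneg
  rintro b' ⟨h1, h2⟩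
  apply pow_nonneg
  linarith

lemma inner_integral_eq {m : ℕ} {a : ℝ} (ha : a ∈ Set.Ioo (0:ℝ) 1) :
    ∫⁻ b, Kern m a b ∂nu = ENNReal.ofReal (∫ b in Set.Ioo (0:ℝ) 1, fb m a b) := by
  have h1 : ∫⁻ b, Kern m a b ∂nu = ∫⁻ b in Set.Ioo (0:ℝ) 1, ENNReal.ofReal (fb m a b) := by
    apply setLIntegral_congr_fun measurableSet_Ioo
    exact (fun b hb => kern_eq_ofReal_fb ha hb)
  rw [h1, ← ofReal_integral_eq_lintegral_ofReal (fb_integrableOn m a)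
    (ae_of_all _ fb_nonneg)]

lemma max_nonneg' (a : ℝ) : 0 ≤ max ((3*a-1)/2) ((1-3*a)/4) := by
  rcases le_total a (1/3) with h | h
  · exact le_trans (by linarith) (le_max_right _ _)
  · exact le_trans (by linarith) (le_max_left _ _)

lemma inner_real_eq {m : ℕ} {a : ℝ} (ha : a ∈ Set.Ioo (0:ℝ) 1) :
    ∫ b in Set.Ioo (0:ℝ) 1, fb m a b = gInner m a := by
  obtain ⟨ha0, ha1⟩ := ha
  by_cases ha2 : a < 1/2
  · -- the region is Ici l
    set l : ℝ := max (2*a) ((a+1)/2) with hl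
    have hreg : {b' : ℝ | 2*a ≤ b' ∧ a+1 ≤ 2*b'} = Set.Ici l := by
      ext b'
      simp only [Set.mem_setOf_eq, Set.mem_Ici, hl, max_le_iff]
      constructor
      · rintro ⟨h1, h2⟩; exact ⟨h1, by linarith⟩
      · rintro ⟨h1, h2⟩; exact ⟨h1, by linarith⟩
    have hl0 : 0 < l := lt_of_lt_of_le (by linarith) (le_max_right _ _)
    have hl1 : l ≤ 1 := max_le (by linarith) (by linarith)
    have hIco : Set.Ioo (0:ℝ) 1 ∩ Set.Ici l = Set.Ico l 1 := by
      ext b'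
      simp only [Set.mem_inter_iff, Set.mem_Ioo, Set.mem_Ici, Set.mem_Ico]
      constructor
      · rintro ⟨⟨h1, h2⟩, h3⟩; exact ⟨h3, h2⟩
      · rintro ⟨h1, h2⟩; exact ⟨⟨lt_of_lt_of_le hl0 h1, h2⟩, h1⟩
    rw [fb, hreg, setIntegral_indicator measurableSet_Ici, hIco,
      setIntegral_congr_set Ico_ae_eq_Ioc, ← intervalIntegral.integral_of_le hl1]
    have hfun : ∀ b' : ℝ, ((3*(b'-a)-1)/2)^m = ((3/2)*b' + (-(3*a+1)/2))^m := by
      intro b'; congr 1; ring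
    simp only [hfun]
    rw [intervalIntegral.integral_comp_mul_add (fun t => t^m) (by norm_num : (3/2:ℝ) ≠ 0)
      (-(3*a+1)/2), integral_pow]
    have hub : (3/2)*1 + (-(3*a+1)/2) = (2-3*a)/2 := by ring
    have hlb : (3/2)*l + (-(3*a+1)/2) = max ((3*a-1)/2) ((1-3*a)/4) := by
      rcases le_total (2*a) ((a+1)/2) with h | h
      · rw [hl, max_eq_right h, max_eq_right (by linarith : (3*a-1)/2 ≤ (1-3*a)/4)]
        ring
      · rw [hl, max_eq_left h, max_eq_left (by linarith : (1-3*a)/4 ≤ (3*a-1)/2)]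
        ring
    rw [hub, hlb, gInner, if_pos ha2, smul_eq_mul]
    set X := ((2-3*a)/2)^(m+1) with hX
    set Y := (max ((3*a-1)/2) ((1-3*a)/4))^(m+1) with hY
    have hm1 : ((m:ℝ) + 1) ≠ 0 := by positivity
    field_simp
    try ring
  · -- integral is zero
    have hz : ∀ b ∈ Set.Ioo (0:ℝ) 1, fb m a b = 0 := by
      intro b hb
      rw [fb, Set.indicator_of_notMem]
      rintro ⟨h1, -⟩
      have := hb.2
      linarith
    rw [setIntegral_congr_fun measurableSet_Ioo hz, integral_zero, gInner, if_neg ha2]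

noncomputable def Gfun (m : ℕ) (a : ℝ) : ℝ :=
  (2/(3*(m+1))) * (((2-3*a)/2)^(m+1) - (max ((3*a-1)/2) ((1-3*a)/4))^(m+1))

lemma max_nonneg'' (a : ℝ) : 0 ≤ max ((3*a-1)/2) ((1-3*a)/4) := by
  rcases le_total a (1/3) with h | h
  · exact le_trans (by linarith) (le_max_right _ _)
  · exact le_trans (by linarith) (le_max_left _ _)

lemma gInner_eq_indicator (m : ℕ) :
    gInner m = Set.indicator (Set.Iio (1/2:ℝ)) (Gfun m) := by
  funext a
  rw [Set.indicator_apply, gInner, Gfun]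
  simp [Set.mem_Iio]

lemma Gfun_continuous (m : ℕ) : Continuous (Gfun m) := by
  unfold Gfun
  apply Continuous.mul continuous_const
  apply Continuous.sub
  · apply Continuous.pow
    continuity
  · apply Continuous.pow
    exact Continuous.max (by continuity) (by continuity)

lemma gInner_nonneg (m : ℕ) (a : ℝ) : 0 ≤ gInner m a := by
  rw [gInner]
  split
  · rename_i ha
    apply mul_nonneg (by positivity)
    rw [sub_nonneg]
    apply pow_le_pow_left₀ (max_nonneg'' a)
    apply max_le <;> linarith
  · exact le_refl 0

lemma gInner_integrableOn (m : ℕ) :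
    IntegrableOn (gInner m) (Set.Ioo (0:ℝ) 1) volume := by
  rw [gInner_eq_indicator]
  exact (((Gfun_continuous m).integrableOn_Icc (a := 0) (b := 1)).mono_set
    Set.Ioo_subset_Icc_self).indicator measurableSet_Iio

lemma outer_real_value (m : ℕ) :
    ∫ a in Set.Ioo (0:ℝ) 1, gInner m a =
      (4/(9*((m:ℝ)+1)*((m:ℝ)+2))) * (1 - 4*(1/4:ℝ)^(m+2)) := by
  have hIoo : Set.Ioo (0:ℝ) 1 ∩ Set.Iio (1/2) = Set.Ioo 0 (1/2) := by
    ext a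
    simp only [Set.mem_inter_iff, Set.mem_Ioo, Set.mem_Iio]
    constructor
    · rintro ⟨⟨h1, h2⟩, h3⟩; exact ⟨h1, h3⟩
    · rintro ⟨h1, h2⟩; exact ⟨⟨h1, by linarith⟩, h2⟩
  rw [gInner_eq_indicator, setIntegral_indicator measurableSet_Iio, hIoo,
    setIntegral_congr_set Ioo_ae_eq_Ioc,
    ← intervalIntegral.integral_of_le (by norm_num : (0:ℝ) ≤ 1/2)]
  unfold Gfun
  rw [intervalIntegral.integral_const_mul]
  have hA : IntervalIntegrable (fun a : ℝ => ((2-3*a)/2)^(m+1)) volume 0 (1/2) :=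
    (by continuity : Continuous fun a : ℝ => ((2-3*a)/2)^(m+1)).intervalIntegrable 0 (1/2)
  have hBc : Continuous (fun a : ℝ => (max ((3*a-1)/2) ((1-3*a)/4))^(m+1)) := by
    apply Continuous.pow
    exact Continuous.max (by continuity) (by continuity)
  have hB : IntervalIntegrable (fun a : ℝ => (max ((3*a-1)/2) ((1-3*a)/4))^(m+1))
      volume 0 (1/2) := hBc.intervalIntegrable 0 (1/2)
  rw [intervalIntegral.integral_sub hA hB]
  -- first integral
  have hAval : (∫ a in (0:ℝ)..(1/2), ((2-3*a)/2)^(m+1)) =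
      (-2/3) * (((1/4:ℝ)^(m+2) - 1)/((m:ℝ)+2)) := by
    have hfun : ∀ a : ℝ, ((2-3*a)/2)^(m+1) = ((-3/2)*a + 1)^(m+1) := by
      intro a; congr 1; ring
    simp only [hfun]
    rw [intervalIntegral.integral_comp_mul_add (fun t => t^(m+1))
      (by norm_num : (-3/2:ℝ) ≠ 0) 1, integral_pow]
    have h1 : (-3/2:ℝ)*0 + 1 = 1 := by norm_num
    have h2 : (-3/2:ℝ)*(1/2) + 1 = 1/4 := by norm_num
    rw [h1, h2, smul_eq_mul, one_pow, show m+1+1 = m+2 from rfl]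
    have hm2 : ((m:ℝ)+2) ≠ 0 := by positivity
    push_cast
    field_simp
    try ring
    try simp
    try tauto
  -- second integral: split at 1/3
  have hB1 : IntervalIntegrable (fun a : ℝ => (max ((3*a-1)/2) ((1-3*a)/4))^(m+1))
      volume 0 (1/3) := hBc.intervalIntegrable 0 (1/3)
  have hB2 : IntervalIntegrable (fun a : ℝ => (max ((3*a-1)/2) ((1-3*a)/4))^(m+1))
      volume (1/3) (1/2) := hBc.intervalIntegrable (1/3) (1/2)
  have hsplit := intervalIntegral.integral_add_adjacent_intervals hB1 hB2
  have hBv1 : (∫ a in (0:ℝ)..(1/3), (max ((3*a-1)/2) ((1-3*a)/4))^(m+1)) =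
      (4/3) * (((1/4:ℝ)^(m+2))/((m:ℝ)+2)) := by
    have hcongr : Set.EqOn (fun a : ℝ => (max ((3*a-1)/2) ((1-3*a)/4))^(m+1))
        (fun a : ℝ => ((-3/4)*a + 1/4)^(m+1)) (Set.uIcc (0:ℝ) (1/3)) := by
      intro a ha
      rw [Set.uIcc_of_le (by norm_num : (0:ℝ) ≤ 1/3), Set.mem_Icc] at ha
      simp only
      rw [max_eq_right (by linarith [ha.1, ha.2] : (3*a-1)/2 ≤ (1-3*a)/4)]
      congr 1; ring
    rw [intervalIntegral.integral_congr hcongr,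
      intervalIntegral.integral_comp_mul_add (fun t => t^(m+1))
        (by norm_num : (-3/4:ℝ) ≠ 0) (1/4), integral_pow]
    have h1 : (-3/4:ℝ)*0 + 1/4 = 1/4 := by norm_num
    have h2 : (-3/4:ℝ)*(1/3) + 1/4 = 0 := by norm_num
    rw [h1, h2, smul_eq_mul, zero_pow (by omega : m + 1 + 1 ≠ 0),
      show m+1+1 = m+2 from rfl]
    have hm2 : ((m:ℝ)+2) ≠ 0 := by positivity
    push_cast
    field_simp
    try ring
    try simp
    try tauto
  have hBv2 : (∫ a in (1/3:ℝ)..(1/2), (max ((3*a-1)/2) ((1-3*a)/4))^(m+1)) =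
      (2/3) * (((1/4:ℝ)^(m+2))/((m:ℝ)+2)) := by
    have hcongr : Set.EqOn (fun a : ℝ => (max ((3*a-1)/2) ((1-3*a)/4))^(m+1))
        (fun a : ℝ => ((3/2)*a + (-1/2))^(m+1)) (Set.uIcc (1/3:ℝ) (1/2)) := by
      intro a ha
      rw [Set.uIcc_of_le (by norm_num : (1/3:ℝ) ≤ 1/2), Set.mem_Icc] at ha
      simp only
      rw [max_eq_left (by linarith [ha.1, ha.2] : (1-3*a)/4 ≤ (3*a-1)/2)]
      congr 1; ring
    rw [intervalIntegral.integral_congr hcongr,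
      intervalIntegral.integral_comp_mul_add (fun t => t^(m+1))
        (by norm_num : (3/2:ℝ) ≠ 0) (-1/2), integral_pow]
    have h1 : (3/2:ℝ)*(1/3) + (-1/2) = 0 := by norm_num
    have h2 : (3/2:ℝ)*(1/2) + (-1/2) = 1/4 := by norm_num
    rw [h1, h2, smul_eq_mul, zero_pow (by omega : m + 1 + 1 ≠ 0),
      show m+1+1 = m+2 from rfl]
    have hm2 : ((m:ℝ)+2) ≠ 0 := by positivity
    push_cast
    field_simp
    try ring
    try simp
    try tauto
  rw [← hsplit, hBv1, hBv2, hAval]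
  have hm1 : ((m:ℝ) + 1) ≠ 0 := by positivity
  have hm2 : ((m:ℝ) + 2) ≠ 0 := by positivity
  set q := ((1/4:ℝ))^(m+2) with hq
  push_cast
  field_simp
  try ring
  try simp
  try tauto


lemma notdom_iff_T {n : ℕ} {x : Fin n → ℝ} (hx : ∀ i, x i ∈ Set.Ioo (0:ℝ) 1) :
    ¬ Dom n x ↔ x ∈ Tset n := by
  constructor
  · intro hnd i
    by_cases hi : x i < 1/2
    · have h1 : ¬ (x i < 1/2 ∧ ∀ j, x j < 2 * x i) := by
        intro h
        exact hnd ((dom_iff hx).2 ⟨i, Or.inl h⟩)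
      push_neg at h1
      obtain ⟨j, hj⟩ := h1 hi
      exact Or.inl ⟨j, hj⟩
    · have h1 : ¬ (1/2 ≤ x i ∧ ∀ j, 2 * x i - 1 < x j) := by
        intro h
        exact hnd ((dom_iff hx).2 ⟨i, Or.inr h⟩)
      push_neg at h1
      obtain ⟨j, hj⟩ := h1 (not_lt.1 hi)
      exact Or.inr ⟨j, hj⟩
  · intro hT hd
    obtain ⟨i, hi | hi⟩ := (dom_iff hx).1 hd
    · rcases hT i with ⟨j, hj⟩ | ⟨j, hj⟩
      · exact absurd (hi.2 j) (not_lt.2 hj)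
      · have := (hx j).1
        have := hi.1
        linarith
    · rcases hT i with ⟨j, hj⟩ | ⟨j, hj⟩
      · have := (hx j).2
        have := hi.1
        linarith
      · exact absurd (hi.2 j) (not_lt.2 hj)

lemma outer_lintegral_value (m : ℕ) :
    ∫⁻ a, ∫⁻ b, Kern m a b ∂nu ∂nu =
      ENNReal.ofReal ((4/(9*((m:ℝ)+1)*((m:ℝ)+2))) * (1 - 4*(1/4:ℝ)^(m+2))) := by
  have h1 : ∫⁻ a, ∫⁻ b, Kern m a b ∂nu ∂nu =
      ∫⁻ a in Set.Ioo (0:ℝ) 1, ENNReal.ofReal (gInner m a) ∂volume := by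
    apply setLIntegral_congr_fun measurableSet_Ioo
    exact fun a ha => by rw [inner_integral_eq ha, inner_real_eq ha]
  rw [h1, ← ofReal_integral_eq_lintegral_ofReal (gInner_integrableOn m)
    (ae_of_all _ (gInner_nonneg m)), outer_real_value m]

lemma measure_Tset (m : ℕ) :
    unifPi (m+2) (Tset (m+2)) = ENNReal.ofReal (4/9 - (16/9)*(1/4:ℝ)^(m+2)) := by
  rw [decomposition m, core_measure m, outer_lintegral_value m, nsmul_eq_mul,
    show (((m+2)*(m+1) : ℕ) : ENNReal) = ENNReal.ofReal (((m+2)*(m+1) : ℕ) : ℝ) from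
      (ENNReal.ofReal_natCast _).symm,
    ← ENNReal.ofReal_mul (by positivity)]
  congr 1
  have hm1 : ((m:ℝ)+1) ≠ 0 := by positivity
  have hm2 : ((m:ℝ)+2) ≠ 0 := by positivity
  push_cast
  field_simp
  ring

lemma measure_domNum_two (m : ℕ) :
    unifPi (m+2) {X | domNum (m+2) X (N01 2 (1/2)) = 2} = unifPi (m+2) (Tset (m+2)) := by
  apply measure_congr
  rw [Filter.eventuallyEq_set]
  filter_upwards [ae_cube (m+2)] with x hx
  constructor
  · intro h2
    have h2' : domNum (m+2) x (N01 2 (1/2)) = 2 := h2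
    by_contra hT
    have hd : Dom (m+2) x := by
      by_contra hnd
      exact hT ((notdom_iff_T hx).1 hnd)
    rw [domNum_of_dom (by omega) hd] at h2'
    norm_num at h2'
  · intro hT
    show domNum (m+2) x (N01 2 (1/2)) = 2
    exact domNum_of_not_dom hx (by omega) ((notdom_iff_T hx).2 hT)

lemma measure_domNum_one (m : ℕ) :
    unifPi (m+2) {X | domNum (m+2) X (N01 2 (1/2)) = 1} = unifPi (m+2) (Tset (m+2))ᶜ := by
  apply measure_congr
  rw [Filter.eventuallyEq_set]
  filter_upwards [ae_cube (m+2)] with x hx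
  constructor
  · intro h1 hT
    have h1' : domNum (m+2) x (N01 2 (1/2)) = 1 := h1
    have hnd : ¬ Dom (m+2) x := (notdom_iff_T hx).2 hT
    rw [domNum_of_not_dom hx (by omega) hnd] at h1'
    norm_num at h1'
  · intro hT
    have hd : Dom (m+2) x := by
      by_contra hnd
      exact hT ((notdom_iff_T hx).1 hnd)
    show domNum (m+2) x (N01 2 (1/2)) = 1
    exact domNum_of_dom (by omega) hd

lemma q_small (m : ℕ) : (1/4:ℝ)^(m+2) ≤ 1/16 := by
  calc (1/4:ℝ)^(m+2) ≤ (1/4:ℝ)^2 :=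
        pow_le_pow_of_le_one (by norm_num) (by norm_num) (by omega)
    _ = 1/16 := by norm_num

lemma toReal_two (m : ℕ) :
    (unifPi (m+2) {X | domNum (m+2) X (N01 2 (1/2)) = 2}).toReal
      = 4/9 - (16/9)*(1/4:ℝ)^(m+2) := by
  rw [measure_domNum_two m, measure_Tset m, ENNReal.toReal_ofReal]
  have := q_small m
  linarith

lemma toReal_one (m : ℕ) :
    (unifPi (m+2) {X | domNum (m+2) X (N01 2 (1/2)) = 1}).toReal
      = 5/9 + (16/9)*(1/4:ℝ)^(m+2) := by
  rw [measure_domNum_one m]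
  have hq := q_small m
  have hqpos : (0:ℝ) < (1/4:ℝ)^(m+2) := by positivity
  have hcompl : unifPi (m+2) (Tset (m+2))ᶜ =
      ENNReal.ofReal (1 - (4/9 - (16/9)*(1/4:ℝ)^(m+2))) := by
    rw [measure_compl (measurableSet_Tset (m+2)) (measure_ne_top _ _), measure_Tset m,
      measure_univ, ← ENNReal.ofReal_one, ← ENNReal.ofReal_sub _ (by linarith)]
  rw [hcompl, ENNReal.toReal_ofReal (by linarith)]
  ring

/-- For i.i.d. uniform points on `(0,1)` with `r = 2`, `c = 1/2`, the domination
number minus one converges in distribution to `Bernoulli(4/9)`: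
`P(γₙ = 2) → 4/9` and `P(γₙ = 1) → 5/9` as `n → ∞`. -/
theorem picd_domNum_limit_r2_chalf :
    Tendsto (fun n => (unifPi n {X | domNum n X (N01 2 (1/2)) = 2}).toReal)
        atTop (𝓝 (4/9)) ∧
    Tendsto (fun n => (unifPi n {X | domNum n X (N01 2 (1/2)) = 1}).toReal)
        atTop (𝓝 (5/9)) := by
  have hpow : Tendsto (fun n : ℕ => (1/4:ℝ)^n) atTop (𝓝 0) :=
    tendsto_pow_atTop_nhds_zero_of_lt_one (by norm_num) (by norm_num)
  constructor
  · have hlim : Tendsto (fun n : ℕ => 4/9 - (16/9)*(1/4:ℝ)^n) atTop (𝓝 (4/9)) := by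
      have := (tendsto_const_nhds (x := (4/9:ℝ)) (f := atTop)).sub (hpow.const_mul (16/9))
      simpa using this
    refine Tendsto.congr' ?_ hlim
    rw [Filter.eventuallyEq_iff_exists_mem]
    refine ⟨{n | 2 ≤ n}, mem_atTop 2, fun n hn => ?_⟩
    have hn' : 2 ≤ n := hn
    obtain ⟨m, rfl⟩ : ∃ m, n = m + 2 := ⟨n - 2, by omega⟩
    exact (toReal_two m).symm
  · have hlim : Tendsto (fun n : ℕ => 5/9 + (16/9)*(1/4:ℝ)^n) atTop (𝓝 (5/9)) := by
      have := (tendsto_const_nhds (x := (5/9:ℝ)) (f := atTop)).add (hpow.const_mul (16/9))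
      simpa using this
    refine Tendsto.congr' ?_ hlim
    rw [Filter.eventuallyEq_iff_exists_mem]
    refine ⟨{n | 2 ≤ n}, mem_atTop 2, fun n hn => ?_⟩
    have hn' : 2 ≤ n := hn
    obtain ⟨m, rfl⟩ : ∃ m, n = m + 2 := ⟨n - 2, by omega⟩
    exact (toReal_one m).symm
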